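/- For every finite alphabet Σ and finite k ≥ 0, there are only finitely many embedding types of k-element subsets of Σ* within their minimal envelopes; i.e., the set {τ(S) : S ⊆ Σ*, |S| = k} is finite, where τ(S) = τ_W(S) for a minimal envelope W of S. -/

import Mathlib

/-- `W` is a `k`-parameter word over the alphabet `σ` (letters are `Sum.inl`, parameters
`λ_i` are `Sum.inr i`): all parameters are among `λ_0, …, λ_{k-1}`, every such parameter
occurs, and before every occurrence of `λ_j` there is an occurrence of `λ_i` for all
`i < j` (equivalently, first occurrences of parameters come in increasing order).
A `0`-parameter word is just a word over `σ`. -/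
def IsPWord {σ : Type} (k : ℕ) (W : List (σ ⊕ ℕ)) : Prop :=
  (∀ i : ℕ, Sum.inr i ∈ W → i < k) ∧
  (∀ i : ℕ, i < k → Sum.inr i ∈ W) ∧
  (∀ i j : ℕ, i < j → ∀ p : Fin W.length, W.get p = Sum.inr j →
    ∃ q : Fin W.length, q < p ∧ W.get q = Sum.inr i)

/-- Substitution `W(U)`: replace each occurrence of the parameter `λ_i` in `W` by `U_i`
and truncate just before the first occurrence of a parameter `λ_i` with `i ≥ |U|`. -/
def subst {σ : Type} (W U : List (σ ⊕ ℕ)) : List (σ ⊕ ℕ) :=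
  (W.takeWhile fun a =>
    match a with
    | Sum.inl _ => true
    | Sum.inr i => decide (i < U.length)).map fun a =>
      match a with
      | Sum.inl s => Sum.inl s
      | Sum.inr i => U.getD i (Sum.inr 0)

/-- `W` is a `d`-parameter envelope of `S` with embedding type `S'`: `W(S') = S`,
where `S'` is a set of words over `σ` of length at most `d`. -/
def IsEnvelopeOf {σ : Type} [DecidableEq σ] (d : ℕ) (W : List (σ ⊕ ℕ))
    (S S' : Finset (List (σ ⊕ ℕ))) : Prop :=
  IsPWord d W ∧ (∀ w ∈ S', IsPWord 0 w ∧ w.length ≤ d) ∧ S'.image (subst W) = S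

namespace PWordAux

variable {σ : Type} [DecidableEq σ]

/-- column vector of position `p` -/
noncomputable def cF (S : Finset (List (σ ⊕ ℕ))) (p : ℕ) : List (Option (σ ⊕ ℕ)) :=
  S.toList.map (fun w => w[p]?)

/-- number of distinct column vectors among positions `< q` -/
noncomputable def NN (S : Finset (List (σ ⊕ ℕ))) (q : ℕ) : ℕ :=
  ((Finset.range q).image (cF S)).card

/-- first occurrence of the column vector of `p` -/
noncomputable def fo (S : Finset (List (σ ⊕ ℕ))) (p : ℕ) : ℕ :=
  Nat.find (⟨p, rfl⟩ : ∃ q, cF S q = cF S p)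

/-- parameter index at position `p` -/
noncomputable def ff (S : Finset (List (σ ⊕ ℕ))) (p : ℕ) : ℕ := NN S (fo S p)

/-- first position carrying parameter `j` -/
noncomputable def gg (S : Finset (List (σ ⊕ ℕ))) (j : ℕ) : ℕ := sInf {q | ff S q = j}

lemma fo_le (S : Finset (List (σ ⊕ ℕ))) (p : ℕ) : fo S p ≤ p := Nat.find_min' _ rfl

lemma cF_fo (S : Finset (List (σ ⊕ ℕ))) (p : ℕ) : cF S (fo S p) = cF S p :=
  Nat.find_spec (⟨p, rfl⟩ : ∃ q, cF S q = cF S p)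

lemma fo_min (S : Finset (List (σ ⊕ ℕ))) {p q : ℕ} (h : q < fo S p) : cF S q ≠ cF S p :=
  Nat.find_min _ h

lemma fo_fo (S : Finset (List (σ ⊕ ℕ))) (p : ℕ) : fo S (fo S p) = fo S p := by
  refine le_antisymm (fo_le _ _) (le_of_not_gt fun h => ?_)
  exact fo_min S h (by rw [cF_fo, cF_fo])

lemma NN_mono (S : Finset (List (σ ⊕ ℕ))) {q q' : ℕ} (h : q ≤ q') : NN S q ≤ NN S q' :=
  Finset.card_le_card (Finset.image_subset_image (Finset.range_subset_range.2 h))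

lemma NN_fo_succ (S : Finset (List (σ ⊕ ℕ))) (p : ℕ) :
    NN S (fo S p + 1) = NN S (fo S p) + 1 := by
  rw [NN, Finset.range_add_one, Finset.image_insert, Finset.card_insert_of_notMem, NN]
  intro hmem
  obtain ⟨r, hr, hrEq⟩ := Finset.mem_image.1 hmem
  exact fo_min S (Finset.mem_range.1 hr) (hrEq.trans (cF_fo S p))

lemma ff_lt (S : Finset (List (σ ⊕ ℕ))) {p m : ℕ} (h : p < m) : ff S p < NN S m := by
  have h1 : NN S (fo S p) < NN S (fo S p + 1) := by rw [NN_fo_succ]; omega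
  exact lt_of_lt_of_le h1 (NN_mono S (by have := fo_le S p; omega))

lemma le_ff (S : Finset (List (σ ⊕ ℕ))) {p m : ℕ} (h : ∀ r < m, cF S r ≠ cF S p) :
    NN S m ≤ ff S p := by
  refine NN_mono S (le_of_not_gt fun hc => ?_)
  exact h (fo S p) hc (cF_fo S p)

lemma exists_ff_eq (S : Finset (List (σ ⊕ ℕ))) {i m : ℕ} (h : i < NN S m) :
    ∃ q < m, ff S q = i := by
  induction m with
  | zero => simp [NN] at h
  | succ m ih =>
    by_cases hc : ∃ r < m, cF S r = cF S m
    · have hNN : NN S (m + 1) = NN S m := by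
        rw [NN, Finset.range_add_one, Finset.image_insert, Finset.insert_eq_self.2, NN]
        obtain ⟨r, hr, hrEq⟩ := hc
        exact Finset.mem_image.2 ⟨r, Finset.mem_range.2 hr, hrEq⟩
      obtain ⟨q, hq, hfq⟩ := ih (by omega)
      exact ⟨q, by omega, hfq⟩
    · push_neg at hc
      have hfo : fo S m = m := by
        refine le_antisymm (fo_le _ _) (le_of_not_gt fun hlt => ?_)
        exact hc (fo S m) hlt (cF_fo S m)
      have hNN : NN S (m + 1) = NN S m + 1 := by
        have := NN_fo_succ S m
        rwa [hfo] at this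
      rcases Nat.lt_or_ge i (NN S m) with hi | hi
      · obtain ⟨q, hq, hfq⟩ := ih hi
        exact ⟨q, by omega, hfq⟩
      · refine ⟨m, by omega, ?_⟩
        have : i = NN S m := by omega
        rw [ff, hfo, this]

lemma fo_eq_of_ff_eq (S : Finset (List (σ ⊕ ℕ))) {p q : ℕ} (h : ff S q = ff S p) :
    fo S q = fo S p := by
  have key : ∀ a b : ℕ, fo S a < fo S b → ff S a < ff S b := by
    intro a b hab
    have h1 : NN S (fo S a) < NN S (fo S a + 1) := by rw [NN_fo_succ]; omega
    exact lt_of_lt_of_le h1 (NN_mono S (by omega))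
  rcases lt_trichotomy (fo S q) (fo S p) with hlt | heq | hgt
  · exact absurd h (ne_of_lt (key _ _ hlt))
  · exact heq
  · exact absurd h.symm (ne_of_lt (key _ _ hgt))

lemma ff_fo (S : Finset (List (σ ⊕ ℕ))) (p : ℕ) : ff S (fo S p) = ff S p := by
  rw [ff, ff, fo_fo]

lemma gg_ff (S : Finset (List (σ ⊕ ℕ))) (p : ℕ) : gg S (ff S p) = fo S p := by
  have hmem : fo S p ∈ {q | ff S q = ff S p} := ff_fo S p
  have hle : gg S (ff S p) ≤ fo S p := Nat.sInf_le hmem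
  have hmem2 : ff S (gg S (ff S p)) = ff S p := Nat.sInf_mem ⟨fo S p, hmem⟩
  have h1 : fo S (gg S (ff S p)) = fo S p := fo_eq_of_ff_eq S hmem2
  have h2 := fo_le S (gg S (ff S p))
  omega

lemma gg_spec (S : Finset (List (σ ⊕ ℕ))) {j m : ℕ} (h : j < NN S m) :
    gg S j < m ∧ ff S (gg S j) = j := by
  obtain ⟨q, hq, hfq⟩ := exists_ff_eq S h
  have hmem : ff S (gg S j) = j := Nat.sInf_mem (⟨q, hfq⟩ : {q | ff S q = j}.Nonempty)
  exact ⟨lt_of_le_of_lt (Nat.sInf_le hfq) hq, hmem⟩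

lemma cF_apply (S : Finset (List (σ ⊕ ℕ))) {w : List (σ ⊕ ℕ)} (hw : w ∈ S) {p p' : ℕ}
    (h : cF S p = cF S p') : w[p]? = w[p']? :=
  List.map_inj_left.1 h w (Finset.mem_toList.2 hw)

set_option linter.unusedSectionVars false

lemma takeWhile_eq_self_of {α : Type*} {l : List α} {p : α → Bool}
    (h : ∀ a ∈ l, p a = true) : l.takeWhile p = l := by
  induction l with
  | nil => rfl
  | cons a t ih =>
    simp [List.takeWhile_cons, h a (by simp), ih (fun a ha => h a (by simp [ha]))]

lemma takeWhile_eq_nil_of {α : Type*} {l : List α} {p : α → Bool}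
    (h : ∀ a ∈ l, p a = false) : l.takeWhile p = [] := by
  cases l with
  | nil => rfl
  | cons a t => simp [List.takeWhile_cons, h a (by simp)]

lemma takeWhile_range_eq (q : ℕ → Bool) {m n : ℕ} (hmn : m ≤ n)
    (h1 : ∀ p < m, q p = true) (h2 : ∀ p, m ≤ p → q p = false) :
    (List.range n).takeWhile q = List.range m := by
  rw [show n = m + (n - m) by omega, List.range_add, List.takeWhile_append]
  rw [takeWhile_eq_self_of (fun a ha => h1 a (List.mem_range.1 ha))]
  rw [if_pos rfl, takeWhile_eq_nil_of, List.append_nil]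
  intro a ha
  obtain ⟨x, _, rfl⟩ := List.mem_map.1 ha
  exact h2 _ (by omega)

lemma isPWord_zero_of {w : List (σ ⊕ ℕ)} (h : ∀ a ∈ w, ∃ s, a = Sum.inl s) :
    IsPWord 0 w := by
  refine ⟨fun i hi => ?_, fun i hi => by omega, fun i j hij p hp => ?_⟩
  · obtain ⟨s, hs⟩ := h _ hi
    simp at hs
  · rw [List.get_eq_getElem] at hp
    obtain ⟨s, hs⟩ := h _ (List.getElem_mem p.isLt)
    rw [hp] at hs
    simp at hs

lemma entries_of_isPWord_zero {w : List (σ ⊕ ℕ)} (h : IsPWord 0 w) :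
    ∀ a ∈ w, ∃ s, a = Sum.inl s := by
  intro a ha
  cases a with
  | inl s => exact ⟨s, rfl⟩
  | inr i => exact absurd (h.1 i ha) (by omega)

/-- the canonical envelope word of `S` -/
noncomputable def WW (S : Finset (List (σ ⊕ ℕ))) : List (σ ⊕ ℕ) :=
  (List.range (S.sup List.length)).map fun p => Sum.inr (ff S p)

/-- the canonical embedding of `w` -/
noncomputable def uu (S : Finset (List (σ ⊕ ℕ))) (w : List (σ ⊕ ℕ)) : List (σ ⊕ ℕ) :=
  (List.range (NN S w.length)).map fun j => w.getD (gg S j) (Sum.inr 0)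

lemma WW_length (S : Finset (List (σ ⊕ ℕ))) : (WW S).length = S.sup List.length := by
  simp [WW]

lemma WW_get (S : Finset (List (σ ⊕ ℕ))) (p : Fin (WW S).length) :
    (WW S).get p = Sum.inr (ff S p.val) := by
  rw [List.get_eq_getElem]; simp [WW]

lemma uu_length (S : Finset (List (σ ⊕ ℕ))) (w : List (σ ⊕ ℕ)) :
    (uu S w).length = NN S w.length := by
  simp [uu]

lemma WW_isPWord (S : Finset (List (σ ⊕ ℕ))) :
    IsPWord (NN S (S.sup List.length)) (WW S) := by
  refine ⟨fun i hi => ?_, fun i hi => ?_, fun i j hij p hp => ?_⟩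
  · obtain ⟨q, hq, hqEq⟩ := List.mem_map.1 hi
    obtain rfl : ff S q = i := by simpa using hqEq
    exact ff_lt S (List.mem_range.1 hq)
  · obtain ⟨q, hq, hfq⟩ := exists_ff_eq S hi
    exact List.mem_map.2 ⟨q, List.mem_range.2 hq, by rw [hfq]⟩
  · rw [WW_get] at hp
    obtain rfl : ff S p.val = j := by simpa using hp
    obtain ⟨q, hq, hfq⟩ := exists_ff_eq S (show i < NN S (fo S p.val) from hij)
    have hqp : q < p.val := lt_of_lt_of_le hq (fo_le S p.val)
    refine ⟨⟨q, lt_trans hqp p.isLt⟩, hqp, ?_⟩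
    rw [WW_get, hfq]

lemma ff_ge_of_len_le (S : Finset (List (σ ⊕ ℕ))) {w : List (σ ⊕ ℕ)} (hw : w ∈ S)
    {p : ℕ} (hp : w.length ≤ p) : NN S w.length ≤ ff S p := by
  refine le_ff S (fun r hr hEq => ?_)
  have h1 : w[r]? = w[p]? := cF_apply S hw hEq
  rw [List.getElem?_eq_getElem hr, List.getElem?_eq_none hp] at h1
  simp at h1

lemma subst_uu (S : Finset (List (σ ⊕ ℕ))) {w : List (σ ⊕ ℕ)} (hw : w ∈ S) :
    subst (WW S) (uu S w) = w := by
  have hlen : w.length ≤ S.sup List.length := Finset.le_sup hw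
  have hW' : (WW S).takeWhile (fun a =>
      match a with
      | Sum.inl _ => true
      | Sum.inr i => decide (i < (uu S w).length)) =
      (List.range w.length).map (fun p => (Sum.inr (ff S p) : σ ⊕ ℕ)) := by
    rw [WW, List.takeWhile_map]
    congr 1
    refine takeWhile_range_eq _ hlen (fun p hp => ?_) (fun p hp => ?_)
    · simp only [Function.comp_apply, uu_length]
      exact decide_eq_true (ff_lt S hp)
    · simp only [Function.comp_apply, uu_length]
      exact decide_eq_false (not_lt.2 (ff_ge_of_len_le S hw hp))
  rw [subst, hW', List.map_map]
  refine List.ext_getElem (by simp) (fun p h1 h2 => ?_)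
  simp only [List.length_map, List.length_range] at h1
  have hffp : ff S p < (uu S w).length := by rw [uu_length]; exact ff_lt S h1
  have hfo : fo S p < w.length := lt_of_le_of_lt (fo_le S p) h1
  have hgetD : (uu S w).getD (ff S p) (Sum.inr 0) = w.getD (gg S (ff S p)) (Sum.inr 0) := by
    rw [List.getD_eq_getElem _ _ hffp]
    simp [uu]
  have hgg : gg S (ff S p) = fo S p := gg_ff S p
  have hcomp : w[fo S p]? = w[p]? := cF_apply S hw (cF_fo S p)
  rw [List.getElem?_eq_getElem hfo, List.getElem?_eq_getElem h1] at hcomp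
  simp only [List.getElem_map, List.getElem_range, Function.comp_apply]
  show (uu S w).getD (ff S p) (Sum.inr 0) = w[p]
  rw [hgetD, hgg, List.getD_eq_getElem _ _ hfo]
  exact Option.some.inj hcomp

lemma uu_entries (S : Finset (List (σ ⊕ ℕ))) {w : List (σ ⊕ ℕ)} (hw : w ∈ S)
    (hent : ∀ a ∈ w, ∃ s, a = Sum.inl s) : ∀ a ∈ uu S w, ∃ s, a = Sum.inl s := by
  intro a ha
  obtain ⟨j, hj, rfl⟩ := List.mem_map.1 ha
  have hj' : j < NN S w.length := List.mem_range.1 hj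
  have hgg : gg S j < w.length := (gg_spec S hj').1
  rw [List.getD_eq_getElem _ _ hgg]
  exact hent _ (List.getElem_mem hgg)

lemma envelope_WW (S : Finset (List (σ ⊕ ℕ))) (hS : ∀ w ∈ S, IsPWord 0 w) :
    IsEnvelopeOf (NN S (S.sup List.length)) (WW S) S (S.image (uu S)) := by
  refine ⟨WW_isPWord S, ?_, ?_⟩
  · intro w' hw'
    obtain ⟨w, hw, rfl⟩ := Finset.mem_image.1 hw'
    refine ⟨isPWord_zero_of (uu_entries S hw (entries_of_isPWord_zero (hS w hw))), ?_⟩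
    rw [uu_length]
    exact NN_mono S (Finset.le_sup hw)
  · rw [Finset.image_image]
    have heq : Finset.image (subst (WW S) ∘ uu S) S = Finset.image id S :=
      Finset.image_congr (fun w hw => subst_uu S (Finset.mem_coe.1 hw))
    rw [heq, Finset.image_id]

lemma bind_getLeft_inj {o o' : Option (σ ⊕ ℕ)}
    (ho : ∀ a, o = some a → ∃ s, a = Sum.inl s)
    (ho' : ∀ a, o' = some a → ∃ s, a = Sum.inl s)
    (h : o.bind Sum.getLeft? = o'.bind Sum.getLeft?) : o = o' := by
  cases o with
  | none =>
    cases o' with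
    | none => rfl
    | some a' =>
      obtain ⟨s, rfl⟩ := ho' a' rfl
      simp at h
  | some a =>
    obtain ⟨s, rfl⟩ := ho a rfl
    cases o' with
    | none => simp at h
    | some a' =>
      obtain ⟨s', rfl⟩ := ho' a' rfl
      simp at h
      rw [h]

lemma NN_le [Finite σ] (S : Finset (List (σ ⊕ ℕ))) (hS : ∀ w ∈ S, IsPWord 0 w) (m : ℕ) :
    NN S m ≤ Nat.card (Fin S.card → Option σ) := by
  have : Fintype σ := Fintype.ofFinite σ
  rw [Nat.card_eq_fintype_card, ← Finset.card_univ, NN]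
  refine Finset.card_le_card_of_injOn
    (fun l (i : Fin S.card) => (l.getD i.val none).bind Sum.getLeft?)
    (fun a _ => Finset.mem_univ _) ?_
  intro a ha b hb hEq
  obtain ⟨p, _, rfl⟩ := Finset.mem_image.1 (Finset.mem_coe.1 ha)
  obtain ⟨p', _, rfl⟩ := Finset.mem_image.1 (Finset.mem_coe.1 hb)
  have hlen : ∀ r : ℕ, (cF S r).length = S.card := by
    intro r; rw [cF, List.length_map, Finset.length_toList]
  refine List.ext_getElem (by rw [hlen, hlen]) (fun i hi hi' => ?_)
  have hik : i < S.card := by rw [hlen] at hi; exact hi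
  have hitl : i < S.toList.length := by rw [Finset.length_toList]; exact hik
  have hwS : S.toList[i] ∈ S := Finset.mem_toList.1 (List.getElem_mem hitl)
  have hent := entries_of_isPWord_zero (hS _ hwS)
  have h1 : (cF S p)[i] = (S.toList[i])[p]? := by simp [cF]
  have h1' : (cF S p')[i] = (S.toList[i])[p']? := by simp [cF]
  rw [h1, h1']
  have h2 := congrFun hEq ⟨i, hik⟩
  simp only at h2
  rw [List.getD_eq_getElem _ _ hi, List.getD_eq_getElem _ _ hi', h1, h1'] at h2
  refine bind_getLeft_inj ?_ ?_ h2
  · intro x hx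
    exact hent x (List.mem_of_getElem? hx)
  · intro x hx
    exact hent x (List.mem_of_getElem? hx)

lemma exists_small_envelope [Finite σ] (S : Finset (List (σ ⊕ ℕ)))
    (hS : ∀ w ∈ S, IsPWord 0 w) :
    ∃ (e : ℕ) (W : List (σ ⊕ ℕ)) (T : Finset (List (σ ⊕ ℕ))),
      e ≤ Nat.card (Fin S.card → Option σ) ∧ IsEnvelopeOf e W S T :=
  ⟨NN S (S.sup List.length), WW S, S.image (uu S), NN_le S hS _, envelope_WW S hS⟩

lemma map_inl_filterMap (w : List (σ ⊕ ℕ)) (h : ∀ a ∈ w, ∃ s, a = Sum.inl s) :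
    (w.filterMap Sum.getLeft?).map Sum.inl = w := by
  induction w with
  | nil => rfl
  | cons a t ih =>
    obtain ⟨s, rfl⟩ := h a (by simp)
    simp [List.filterMap_cons, ih (fun a ha => h a (by simp [ha]))]

end PWordAux

theorem finitely_many_embedding_types (σ : Type) [Finite σ] [DecidableEq σ] (k : ℕ) :
    {S' : Finset (List (σ ⊕ ℕ)) |
      ∃ (S : Finset (List (σ ⊕ ℕ))) (d : ℕ) (W : List (σ ⊕ ℕ)),
        S.card = k ∧ (∀ w ∈ S, IsPWord 0 w) ∧ IsEnvelopeOf d W S S' ∧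
        ∀ (e : ℕ) (W₂ : List (σ ⊕ ℕ)) (T : Finset (List (σ ⊕ ℕ))),
          IsEnvelopeOf e W₂ S T → d ≤ e}.Finite := by
  classical
  set B := Nat.card (Fin k → Option σ) with hB
  set G : Set (List (σ ⊕ ℕ)) :=
    {w | (∀ a ∈ w, ∃ s, a = Sum.inl s) ∧ w.length ≤ B} with hGdef
  have hG : G.Finite := by
    have h1 : {l : List σ | l.length ≤ B}.Finite := List.finite_length_le σ B
    refine (h1.image (List.map Sum.inl)).subset ?_
    rintro w ⟨hw1, hw2⟩
    refine ⟨w.filterMap Sum.getLeft?, ?_, PWordAux.map_inl_filterMap w hw1⟩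
    exact le_trans (List.length_filterMap_le _ _) hw2
  have hfin : (((↑) : Finset (List (σ ⊕ ℕ)) → Set (List (σ ⊕ ℕ))) ⁻¹' {t : Set (List (σ ⊕ ℕ)) | t ⊆ G}).Finite :=
    (hG.finite_subsets).preimage (Finset.coe_injective.injOn)
  refine hfin.subset ?_
  rintro S' ⟨S, d, W, hcard, hS, hEnv, hmin⟩
  obtain ⟨e, W₂, T, heB, hET⟩ := PWordAux.exists_small_envelope S hS
  rw [hcard] at heB
  have hd : d ≤ B := le_trans (hmin e W₂ T hET) heB
  intro w hw
  obtain ⟨hpw, hlenw⟩ := hEnv.2.1 w hw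
  exact ⟨PWordAux.entries_of_isPWord_zero hpw, le_trans hlenw hd⟩
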